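/- The space (Hv(U,F*), ‖·‖_v) of weighted holomorphic mappings into F* is isometrically isomorphic to the dual of the completion of lin((vΔ_v)(U)) ⊗ F under the operator norm inherited from Hv(U,F*)*, via Λ(f)(∑ᵢ λᵢ v(xᵢ)δ_{xᵢ} ⊗ yᵢ) = ∑ᵢ λᵢ v(xᵢ)⟨f(xᵢ), yᵢ⟩, with inverse ⟨Λ^{-1}(φ)(x), y⟩ = φ(δ_x ⊗ y). -/

import Mathlib

open scoped BigOperators
open MeasureTheory

noncomputable section

/-- The closed unit ball of the weighted holomorphic space `Hv(U)`. -/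
def HvBall {E : Type*} [NormedAddCommGroup E] [NormedSpace ℂ E]
    (v : E → ℝ) (U : Set E) : Set (E → ℂ) :=
  {g | DifferentiableOn ℂ g U ∧ ∀ x ∈ U, v x * ‖g x‖ ≤ 1}

/-- `sup_{g ∈ B_{Hv(U)}} (∑ |λᵢ|^p v(xᵢ)^p |g(xᵢ)|^p)^(1/p)`. -/
def hvSup {E : Type*} [NormedAddCommGroup E] [NormedSpace ℂ E]
    (p : ℝ) (v : E → ℝ) (U : Set E) {n : ℕ} (lam : Fin n → ℂ) (x : Fin n → E) : ℝ :=
  ⨆ g : HvBall v U, (∑ i, ‖lam i‖ ^ p * v (x i) ^ p * ‖(g : E → ℂ) (x i)‖ ^ p) ^ (1 / p)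

/-- `f` satisfies the `p`-summing weighted holomorphic inequality with constant `C`. -/
def PSummingWith {E F : Type*} [NormedAddCommGroup E] [NormedSpace ℂ E]
    [NormedAddCommGroup F] [NormedSpace ℂ F]
    (p : ℝ) (v : E → ℝ) (U : Set E) (f : E → F) (C : ℝ) : Prop :=
  ∀ (n : ℕ) (lam : Fin n → ℂ) (x : Fin n → E), (∀ i, x i ∈ U) →
    (∑ i, ‖lam i‖ ^ p * v (x i) ^ p * ‖f (x i)‖ ^ p) ^ (1 / p) ≤ C * hvSup p v U lam x

/-- The `p`-summing weighted holomorphic norm `π_p^{Hv}(f)`. -/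
def pihv {E F : Type*} [NormedAddCommGroup E] [NormedSpace ℂ E]
    [NormedAddCommGroup F] [NormedSpace ℂ F]
    (p : ℝ) (v : E → ℝ) (U : Set E) (f : E → F) : ℝ :=
  sInf {C | 0 ≤ C ∧ PSummingWith p v U f C}

/-- `‖δ_z‖ = sup_{g ∈ B_{Hv(U)}} |g(z)|`. -/
def dnorm {E : Type*} [NormedAddCommGroup E] [NormedSpace ℂ E]
    (v : E → ℝ) (U : Set E) (z : E) : ℝ :=
  ⨆ g : HvBall v U, ‖(g : E → ℂ) z‖

/-- `f` belongs to `Hv(U, F*)`. -/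
def MemHvDual {E F : Type*} [NormedAddCommGroup E] [NormedSpace ℂ E]
    [NormedAddCommGroup F] [NormedSpace ℂ F]
    (v : E → ℝ) (U : Set E) (f : E → (F →L[ℂ] ℂ)) : Prop :=
  DifferentiableOn ℂ f U ∧ ∃ K, ∀ x ∈ U, v x * ‖f x‖ ≤ K

/-- The action of the molecule `∑ λᵢ v(xᵢ) δ_{xᵢ} ⊗ yᵢ` on `f ∈ Hv(U,F*)`. -/
def molAct {E F : Type*} [NormedAddCommGroup E] [NormedSpace ℂ E]
    [NormedAddCommGroup F] [NormedSpace ℂ F]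
    (v : E → ℝ) {n : ℕ} (lam : Fin n → ℂ) (x : Fin n → E) (y : Fin n → F)
    (f : E → (F →L[ℂ] ℂ)) : ℂ :=
  ∑ i, lam i * (v (x i) : ℂ) * (f (x i)) (y i)

/-- The molecule norm inherited from `Hv(U,F*)*`. -/
def molNorm {E F : Type*} [NormedAddCommGroup E] [NormedSpace ℂ E]
    [NormedAddCommGroup F] [NormedSpace ℂ F]
    (v : E → ℝ) (U : Set E) {n : ℕ}
    (lam : Fin n → ℂ) (x : Fin n → E) (y : Fin n → F) : ℝ :=
  sSup {t : ℝ | ∃ f : E → (F →L[ℂ] ℂ), DifferentiableOn ℂ f U ∧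
    (∀ z ∈ U, v z * ‖f z‖ ≤ 1) ∧ t = ‖molAct v lam x y f‖}

open Metric Set Filter Topology

lemma schwarz_lin {g : ℂ → ℂ} {ρ M : ℝ} (hρ : 0 < ρ)
    (hd : DifferentiableOn ℂ g (ball 0 ρ))
    (hb : ∀ z ∈ ball (0:ℂ) ρ, ‖g z‖ ≤ M) (h0 : g 0 = 0) :
    ∀ z ∈ ball (0:ℂ) ρ, ‖g z‖ ≤ M / ρ * ‖z‖ := by
  intro z hz
  rcases eq_or_ne z 0 with rfl | hz0
  · simp [h0]
  have hzn : (0:ℝ) < ‖z‖ := norm_pos_iff.mpr hz0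
  refine le_of_forall_pos_le_add fun ε hε => ?_
  set ε' : ℝ := ε * ρ / ‖z‖ with hε'd
  have hε' : 0 < ε' := by positivity
  have hmaps : Set.MapsTo g (ball 0 ρ) (ball (g 0) (M + ε')) := by
    intro w hw
    rw [h0, mem_ball, dist_zero_right]
    exact lt_of_le_of_lt (hb w hw) (lt_add_of_pos_right _ hε')
  have hds := Complex.norm_dslope_le_div_of_mapsTo_ball hd (hmaps.mono_right ball_subset_closedBall) hz
  rw [dslope_of_ne _ hz0, slope_def_module, h0, sub_zero, sub_zero, norm_smul,
    norm_inv] at hds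
  have : ‖g z‖ ≤ (M + ε') / ρ * ‖z‖ := by
    have := mul_le_mul_of_nonneg_left hds (le_of_lt hzn)
    rw [← mul_assoc, mul_inv_cancel₀ (ne_of_gt hzn), one_mul] at this
    linarith [this]
  have heq : (M + ε') / ρ * ‖z‖ = M / ρ * ‖z‖ + ε := by
    have h2 : ε' / ρ * ‖z‖ = ε := by
      rw [hε'd, div_div, div_mul_eq_mul_div, div_eq_iff (by positivity : ‖z‖ * ρ ≠ 0)]
      ring
    calc (M + ε') / ρ * ‖z‖ = M / ρ * ‖z‖ + ε' / ρ * ‖z‖ := by ring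
    _ = M / ρ * ‖z‖ + ε := by rw [h2]
  linarith [this, heq.le]

lemma schwarz_quad {g : ℂ → ℂ} {ρ M : ℝ} (hρ : 0 < ρ)
    (hd : DifferentiableOn ℂ g (ball 0 ρ))
    (hb : ∀ z ∈ ball (0:ℂ) ρ, ‖g z‖ ≤ M) (h0 : g 0 = 0) (h1 : deriv g 0 = 0) :
    ∀ z ∈ ball (0:ℂ) ρ, ‖g z‖ ≤ M / ρ ^ 2 * ‖z‖ ^ 2 := by
  intro z hz
  rcases eq_or_ne z 0 with rfl | hz0
  · simp [h0]
  have hzn : (0:ℝ) < ‖z‖ := norm_pos_iff.mpr hz0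
  have hd₁ : DifferentiableOn ℂ (dslope g 0) (ball 0 ρ) :=
    (Complex.differentiableOn_dslope (isOpen_ball.mem_nhds (mem_ball_self hρ))).mpr hd
  have h10 : dslope g 0 0 = 0 := by rw [dslope_same]; exact h1
  have hgz : g z = z • dslope g 0 z := by
    rw [dslope_of_ne _ hz0, slope_def_module, h0, sub_zero, sub_zero, smul_inv_smul₀ hz0]
  refine le_of_forall_pos_le_add fun ε hε => ?_
  set ε' : ℝ := ε * ρ ^ 2 / ‖z‖ ^ 2 with hε'd
  have hε' : 0 < ε' := by positivity
  have hb₁ : ∀ w ∈ ball (0:ℂ) ρ, ‖dslope g 0 w‖ ≤ (M + ε') / ρ := by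
    intro w hw
    have hmaps : Set.MapsTo g (ball 0 ρ) (ball (g 0) (M + ε')) := by
      intro w' hw'
      rw [h0, mem_ball, dist_zero_right]
      exact lt_of_le_of_lt (hb w' hw') (lt_add_of_pos_right _ hε')
    exact Complex.norm_dslope_le_div_of_mapsTo_ball hd (hmaps.mono_right ball_subset_closedBall) hw
  have := schwarz_lin hρ hd₁ hb₁ h10 z hz
  have hfin : ‖g z‖ ≤ (M + ε') / ρ ^ 2 * ‖z‖ ^ 2 := by
    rw [hgz, norm_smul]
    calc ‖z‖ * ‖dslope g 0 z‖ ≤ ‖z‖ * ((M + ε') / ρ / ρ * ‖z‖) := by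
          exact mul_le_mul_of_nonneg_left this (norm_nonneg z)
    _ = (M + ε') / ρ ^ 2 * ‖z‖ ^ 2 := by ring
  have heq : (M + ε') / ρ ^ 2 * ‖z‖ ^ 2 = M / ρ ^ 2 * ‖z‖ ^ 2 + ε := by
    have h2 : ε' / ρ ^ 2 * ‖z‖ ^ 2 = ε := by
      rw [hε'd, div_div, div_mul_eq_mul_div, div_eq_iff (by positivity : ‖z‖ ^ 2 * ρ ^ 2 ≠ 0)]
      ring
    calc (M + ε') / ρ ^ 2 * ‖z‖ ^ 2 = M / ρ ^ 2 * ‖z‖ ^ 2 + ε' / ρ ^ 2 * ‖z‖ ^ 2 := by ring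
    _ = M / ρ ^ 2 * ‖z‖ ^ 2 + ε := by rw [h2]
  linarith [hfin, heq.le]

lemma cauchy_deriv_bound {G : ℂ → ℂ} {ρ M : ℝ} (hρ : 0 < ρ)
    (hd : DifferentiableOn ℂ G (ball 0 ρ))
    (hb : ∀ z ∈ ball (0:ℂ) ρ, ‖G z‖ ≤ M) :
    ‖deriv G 0‖ ≤ 2 * M / ρ := by
  refine le_of_forall_pos_le_add fun ε hε => ?_
  set ε' : ℝ := ε * ρ with hε'd
  have hε' : 0 < ε' := by positivity
  have hmaps : Set.MapsTo G (ball 0 ρ) (ball (G 0) (2 * M + ε')) := by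
    intro w hw
    rw [mem_ball, dist_eq_norm]
    have h1 : ‖G w - G 0‖ ≤ ‖G w‖ + ‖G 0‖ := norm_sub_le _ _
    have h2 := hb w hw
    have h3 := hb 0 (mem_ball_self hρ)
    linarith
  have := Complex.norm_deriv_le_div_of_mapsTo_ball hd (hmaps.mono_right ball_subset_closedBall) hρ
  have heq : (2 * M + ε') / ρ = 2 * M / ρ + ε := by
    rw [hε'd]; field_simp
  linarith [this, heq.le]

lemma cauchy_taylor {G : ℂ → ℂ} {ρ M : ℝ} (hρ : 0 < ρ)
    (hd : DifferentiableOn ℂ G (ball 0 ρ))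
    (hb : ∀ z ∈ ball (0:ℂ) ρ, ‖G z‖ ≤ M) :
    ∀ z ∈ ball (0:ℂ) ρ, ‖G z - G 0 - z * deriv G 0‖ ≤ 4 * M / ρ ^ 2 * ‖z‖ ^ 2 := by
  have hM : 0 ≤ M := le_trans (norm_nonneg _) (hb 0 (mem_ball_self hρ))
  have hder := cauchy_deriv_bound hρ hd hb
  set χ : ℂ → ℂ := fun z => G z - G 0 - z * deriv G 0 with hχd
  have hdχ : DifferentiableOn ℂ χ (ball 0 ρ) :=
    (hd.sub_const (G 0)).sub ((differentiable_id.mul_const _).differentiableOn)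
  have hbχ : ∀ z ∈ ball (0:ℂ) ρ, ‖χ z‖ ≤ 4 * M := by
    intro z hz
    have hz' : ‖z‖ < ρ := by simpa [dist_zero_right] using mem_ball.mp hz
    have h1 : ‖z * deriv G 0‖ ≤ 2 * M := by
      rw [norm_mul]
      calc ‖z‖ * ‖deriv G 0‖ ≤ ρ * (2 * M / ρ) :=
            mul_le_mul hz'.le hder (norm_nonneg _) hρ.le
      _ = 2 * M := by field_simp
    have h2 := hb z hz
    have h3 := hb 0 (mem_ball_self hρ)
    calc ‖χ z‖ ≤ ‖G z - G 0‖ + ‖z * deriv G 0‖ := norm_sub_le _ _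
    _ ≤ (‖G z‖ + ‖G 0‖) + ‖z * deriv G 0‖ := by linarith [norm_sub_le (G z) (G 0)]
    _ ≤ 4 * M := by linarith
  have hχ0 : χ 0 = 0 := by simp [hχd]
  have hG0' : HasDerivAt G (deriv G 0) 0 :=
    (hd.differentiableAt (isOpen_ball.mem_nhds (mem_ball_self hρ))).hasDerivAt
  have hlin : HasDerivAt (fun z : ℂ => G 0 + z * deriv G 0) (deriv G 0) 0 := by
    simpa using ((hasDerivAt_id (0:ℂ)).mul_const (deriv G 0)).const_add (G 0)
  have hχder : deriv χ 0 = 0 := by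
    have heq : χ = fun z => G z - (G 0 + z * deriv G 0) := by
      funext z; rw [hχd]; ring
    rw [heq]
    have := (hG0'.sub hlin).deriv
    simp only [sub_self] at this; exact this
  intro z hz
  exact schwarz_quad hρ hdχ hbχ hχ0 hχder z hz

section Aux2
open Metric Set Filter Topology

variable {E F : Type*} [NormedAddCommGroup E] [NormedSpace ℂ E]
  [NormedAddCommGroup F] [NormedSpace ℂ F]
  {v : E → ℝ} {U : Set E}

lemma molNorm_le {n : ℕ} {lam : Fin n → ℂ} {x : Fin n → E} {y : Fin n → F}
    {B : ℝ} (hB : 0 ≤ B)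
    (h : ∀ f : E → (F →L[ℂ] ℂ), DifferentiableOn ℂ f U → (∀ z ∈ U, v z * ‖f z‖ ≤ 1) →
      ‖molAct v lam x y f‖ ≤ B) : molNorm v U lam x y ≤ B :=
  Real.sSup_le (by rintro t ⟨f, h1, h2, rfl⟩; exact h f h1 h2) hB

lemma term_norm (hv0 : 0 ≤ v z) (a : ℂ) (A : F →L[ℂ] ℂ) (y : F) :
    ‖a * (v z : ℂ) * A y‖ = ‖a‖ * (v z * ‖A y‖) := by
  rw [norm_mul, norm_mul, Complex.norm_real, Real.norm_of_nonneg hv0, mul_assoc]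

lemma fz_le {f : E → F →L[ℂ] ℂ} (hfb : ∀ z ∈ U, v z * ‖f z‖ ≤ 1)
    {z : E} (hz : z ∈ U) (hvz : 0 < v z) (y : F) : v z * ‖f z y‖ ≤ ‖y‖ := by
  calc v z * ‖f z y‖ ≤ v z * (‖f z‖ * ‖y‖) := by
        exact mul_le_mul_of_nonneg_left ((f z).le_opNorm y) hvz.le
  _ = (v z * ‖f z‖) * ‖y‖ := by ring
  _ ≤ 1 * ‖y‖ := mul_le_mul_of_nonneg_right (hfb z hz) (norm_nonneg y)
  _ = ‖y‖ := one_mul _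

lemma molNorm_bddAbove (hv : ∀ z ∈ U, 0 < v z) {n : ℕ} {lam : Fin n → ℂ}
    {x : Fin n → E} {y : Fin n → F} (hx : ∀ i, x i ∈ U) :
    BddAbove {t : ℝ | ∃ f : E → (F →L[ℂ] ℂ), DifferentiableOn ℂ f U ∧
      (∀ z ∈ U, v z * ‖f z‖ ≤ 1) ∧ t = ‖molAct v lam x y f‖} := by
  refine ⟨∑ i, ‖lam i‖ * ‖y i‖, ?_⟩
  rintro t ⟨f, h1, h2, rfl⟩
  calc ‖molAct v lam x y f‖ ≤ ∑ i, ‖lam i * (v (x i) : ℂ) * (f (x i)) (y i)‖ :=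
        norm_sum_le _ _
  _ ≤ ∑ i, ‖lam i‖ * ‖y i‖ := by
      refine Finset.sum_le_sum fun i _ => ?_
      rw [term_norm (hv _ (hx i)).le]
      exact mul_le_mul_of_nonneg_left (fz_le h2 (hx i) (hv _ (hx i)) (y i)) (norm_nonneg _)

lemma mem_ball_aux {x₀ : E} {r ρ : ℝ} (hr : 0 < r) {u : E} (hρu : ρ * ‖u‖ ≤ r)
    {s : ℂ} (hs : ‖s‖ < ρ) : x₀ + s • u ∈ ball x₀ r := by
  rw [mem_ball, dist_eq_norm, add_sub_cancel_left, norm_smul]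
  rcases eq_or_lt_of_le (norm_nonneg u) with h0 | h0
  · rw [← h0, mul_zero]; exact hr
  · calc ‖s‖ * ‖u‖ < ρ * ‖u‖ := by exact mul_lt_mul_of_pos_right hs h0
    _ ≤ r := hρu

lemma Gdiff {f : E → F →L[ℂ] ℂ} (hf : DifferentiableOn ℂ f U)
    {x₀ : E} {r ρ : ℝ} (hr : 0 < r) (hball : ball x₀ r ⊆ U) (u : E) (y : F)
    (hρu : ρ * ‖u‖ ≤ r) :
    DifferentiableOn ℂ (fun s : ℂ => f (x₀ + s • u) y) (ball 0 ρ) := by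
  have haff : Differentiable ℂ (fun s : ℂ => x₀ + s • u) :=
    (differentiable_id.smul_const u).const_add x₀
  have h1 : DifferentiableOn ℂ (fun s : ℂ => f (x₀ + s • u)) (ball 0 ρ) := by
    refine hf.comp haff.differentiableOn ?_
    intro s hs
    exact hball (mem_ball_aux hr hρu (by simpa [dist_zero_right] using hs))
  exact (ContinuousLinearMap.apply ℂ ℂ y).differentiable.comp_differentiableOn h1

lemma Gbound {f : E → F →L[ℂ] ℂ} (hfb : ∀ z ∈ U, v z * ‖f z‖ ≤ 1)
    (hv : ∀ z ∈ U, 0 < v z)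
    {x₀ : E} {r mm ρ : ℝ} (hr : 0 < r) (hm : 0 < mm) (hball : ball x₀ r ⊆ U)
    (hvm : ∀ z ∈ ball x₀ r, mm ≤ v z) (u : E) (y : F) (hρu : ρ * ‖u‖ ≤ r) :
    ∀ s : ℂ, s ∈ ball (0:ℂ) ρ → ‖f (x₀ + s • u) y‖ ≤ ‖y‖ / mm := by
  intro s hs
  have hz : x₀ + s • u ∈ ball x₀ r := mem_ball_aux hr hρu (by simpa [dist_zero_right] using hs)
  have hzU : x₀ + s • u ∈ U := hball hz
  have h1 := fz_le hfb hzU (hv _ hzU) y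
  have h2 : mm * ‖f (x₀ + s • u) y‖ ≤ v (x₀ + s • u) * ‖f (x₀ + s • u) y‖ :=
    mul_le_mul_of_nonneg_right (hvm _ hz) (norm_nonneg _)
  rw [le_div_iff₀ hm, mul_comm]
  linarith

lemma hasDerivAt_slice {f : E → F →L[ℂ] ℂ} {x₀ : E} (hf : DifferentiableAt ℂ f x₀)
    (w : E) (y : F) :
    HasDerivAt (fun s : ℂ => f (x₀ + s • w) y) ((fderiv ℂ f x₀ w) y) 0 := by
  have h1 : HasDerivAt (fun s : ℂ => x₀ + s • w) w 0 := by
    simpa using ((hasDerivAt_id (0:ℂ)).smul_const w).const_add x₀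
  have h2 : HasFDerivAt f (fderiv ℂ f x₀) (x₀ + (0:ℂ) • w) := by
    simpa using hf.hasFDerivAt
  have h3 : HasDerivAt (fun s : ℂ => f (x₀ + s • w)) (fderiv ℂ f x₀ w) 0 :=
    h2.comp_hasDerivAt 0 h1
  exact (ContinuousLinearMap.apply ℂ ℂ y).hasFDerivAt.comp_hasDerivAt 0 h3

lemma keyEst {f : E → F →L[ℂ] ℂ} (hf : DifferentiableOn ℂ f U)
    (hfb : ∀ z ∈ U, v z * ‖f z‖ ≤ 1) (hv : ∀ z ∈ U, 0 < v z)
    {x₀ : E} {r mm : ℝ} (hr : 0 < r) (hm : 0 < mm)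
    (hball : ball x₀ r ⊆ U) (hvm : ∀ z ∈ ball x₀ r, mm ≤ v z) (u : E) (y : F) :
    (∀ s : ℂ, ‖s‖ * ‖u‖ < r →
       ‖f (x₀ + s • u) y - f x₀ y - s * deriv (fun w : ℂ => f (x₀ + w • u) y) 0‖
         ≤ 4 * (‖y‖ / mm) * (‖u‖ / r) ^ 2 * ‖s‖ ^ 2) ∧
    ‖deriv (fun w : ℂ => f (x₀ + w • u) y) 0‖ ≤ 2 * (‖y‖ / mm) * (‖u‖ / r) := by
  rcases eq_or_ne u 0 with rfl | hu
  · have hG : (fun w : ℂ => f (x₀ + w • (0:E)) y) = fun _ : ℂ => f x₀ y := by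
      funext w; simp
    constructor
    · intro s _
      rw [hG, deriv_const]
      simp only [smul_zero, add_zero, mul_zero, sub_zero, sub_self, norm_zero]
      positivity
    · rw [hG, deriv_const]
      simp only [norm_zero]
      positivity
  · have hun : 0 < ‖u‖ := norm_pos_iff.mpr hu
    set ρ : ℝ := r / ‖u‖ with hρd
    have hρ : 0 < ρ := div_pos hr hun
    have hρu : ρ * ‖u‖ ≤ r := by rw [hρd, div_mul_cancel₀ _ hun.ne']
    set G : ℂ → ℂ := fun s => f (x₀ + s • u) y with hGd
    have hdG : DifferentiableOn ℂ G (ball 0 ρ) := Gdiff hf hr hball u y hρu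
    have hbG : ∀ z ∈ ball (0:ℂ) ρ, ‖G z‖ ≤ ‖y‖ / mm :=
      Gbound hfb hv hr hm hball hvm u y hρu
    have hG0 : G 0 = f x₀ y := by rw [hGd]; simp
    have hmem : ∀ s : ℂ, ‖s‖ * ‖u‖ < r → s ∈ ball (0:ℂ) ρ := by
      intro s hs
      rw [mem_ball, dist_zero_right, hρd, lt_div_iff₀ hun]
      exact hs
    have hconv : 4 * (‖y‖ / mm) / ρ ^ 2 = 4 * (‖y‖ / mm) * (‖u‖ / r) ^ 2 := by
      rw [hρd, div_pow, div_div_eq_mul_div, div_pow]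
      ring
    have hconv2 : 2 * (‖y‖ / mm) / ρ = 2 * (‖y‖ / mm) * (‖u‖ / r) := by
      rw [hρd, div_div_eq_mul_div, mul_div_assoc]
    constructor
    · intro s hs
      have := cauchy_taylor hρ hdG hbG s (hmem s hs)
      rw [hG0] at this
      calc ‖f (x₀ + s • u) y - f x₀ y - s * deriv G 0‖
          ≤ 4 * (‖y‖ / mm) / ρ ^ 2 * ‖s‖ ^ 2 := this
      _ = 4 * (‖y‖ / mm) * (‖u‖ / r) ^ 2 * ‖s‖ ^ 2 := by rw [hconv]
    · have := cauchy_deriv_bound hρ hdG hbG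
      calc ‖deriv G 0‖ ≤ 2 * (‖y‖ / mm) / ρ := this
      _ = 2 * (‖y‖ / mm) * (‖u‖ / r) := hconv2

lemma coef1 {vz : ℂ} (h : vz ≠ 0) : ∀ s X : ℂ, 1 / (s * vz) * vz * X = X / s := by
  intro s X
  rcases eq_or_ne s 0 with rfl | hs
  · simp
  · field_simp

lemma coef0 {vz : ℂ} (h : vz ≠ 0) : ∀ X : ℂ, 1 / vz * vz * X = X := by
  intro X
  field_simp

lemma keyDQ2 {f : E → F →L[ℂ] ℂ} (hf : DifferentiableOn ℂ f U)
    (hfb : ∀ z ∈ U, v z * ‖f z‖ ≤ 1) (hv : ∀ z ∈ U, 0 < v z)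
    {x₀ : E} {r mm : ℝ} (hr : 0 < r) (hm : 0 < mm)
    (hball : ball x₀ r ⊆ U) (hvm : ∀ z ∈ ball x₀ r, mm ≤ v z) (u : E) (y : F)
    {s t : ℂ} (hs : s ≠ 0) (ht : t ≠ 0) (hsu : ‖s‖ * ‖u‖ < r) (htu : ‖t‖ * ‖u‖ < r) :
    ‖(f (x₀ + s • u) y - f x₀ y) / s - (f (x₀ + t • u) y - f x₀ y) / t‖
      ≤ 4 * (‖y‖ / mm) * (‖u‖ / r) ^ 2 * (‖s‖ + ‖t‖) := by
  obtain ⟨hA, -⟩ := keyEst hf hfb hv hr hm hball hvm u y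
  set d := deriv (fun w : ℂ => f (x₀ + w • u) y) 0 with hd
  set C : ℝ := 4 * (‖y‖ / mm) * (‖u‖ / r) ^ 2 with hC
  have hid : (f (x₀ + s • u) y - f x₀ y) / s - (f (x₀ + t • u) y - f x₀ y) / t
      = (f (x₀ + s • u) y - f x₀ y - s * d) / s
        - (f (x₀ + t • u) y - f x₀ y - t * d) / t := by
    field_simp
    ring
  have h1 : ‖(f (x₀ + s • u) y - f x₀ y - s * d) / s‖ ≤ C * ‖s‖ := by
    rw [norm_div, div_le_iff₀ (norm_pos_iff.mpr hs)]
    calc ‖f (x₀ + s • u) y - f x₀ y - s * d‖ ≤ C * ‖s‖ ^ 2 := hA s hsu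
    _ = C * ‖s‖ * ‖s‖ := by ring
  have h2 : ‖(f (x₀ + t • u) y - f x₀ y - t * d) / t‖ ≤ C * ‖t‖ := by
    rw [norm_div, div_le_iff₀ (norm_pos_iff.mpr ht)]
    calc ‖f (x₀ + t • u) y - f x₀ y - t * d‖ ≤ C * ‖t‖ ^ 2 := hA t htu
    _ = C * ‖t‖ * ‖t‖ := by ring
  calc ‖(f (x₀ + s • u) y - f x₀ y) / s - (f (x₀ + t • u) y - f x₀ y) / t‖
      ≤ ‖(f (x₀ + s • u) y - f x₀ y - s * d) / s‖
        + ‖(f (x₀ + t • u) y - f x₀ y - t * d) / t‖ := by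
        rw [hid]; exact norm_sub_le _ _
  _ ≤ C * ‖s‖ + C * ‖t‖ := add_le_add h1 h2
  _ = C * (‖s‖ + ‖t‖) := by ring

lemma keyDQ1 {f : E → F →L[ℂ] ℂ} (hf : DifferentiableOn ℂ f U)
    (hfb : ∀ z ∈ U, v z * ‖f z‖ ≤ 1) (hv : ∀ z ∈ U, 0 < v z)
    {x₀ : E} {r mm : ℝ} (hr : 0 < r) (hm : 0 < mm)
    (hball : ball x₀ r ⊆ U) (hvm : ∀ z ∈ ball x₀ r, mm ≤ v z) (u : E) (y : F)
    {s : ℂ} (hs : s ≠ 0) (hsu : ‖s‖ * ‖u‖ ≤ r / 2) :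
    ‖(f (x₀ + s • u) y - f x₀ y) / s‖ ≤ 4 * (‖y‖ / mm) * (‖u‖ / r) := by
  obtain ⟨hA, hD⟩ := keyEst hf hfb hv hr hm hball hvm u y
  set d := deriv (fun w : ℂ => f (x₀ + w • u) y) 0 with hd
  have hsu' : ‖s‖ * ‖u‖ < r := lt_of_le_of_lt hsu (by linarith)
  have hid : (f (x₀ + s • u) y - f x₀ y) / s
      = (f (x₀ + s • u) y - f x₀ y - s * d) / s + d := by
    field_simp
    ring
  have h1 : ‖(f (x₀ + s • u) y - f x₀ y - s * d) / s‖
      ≤ 4 * (‖y‖ / mm) * (‖u‖ / r) ^ 2 * ‖s‖ := by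
    rw [norm_div, div_le_iff₀ (norm_pos_iff.mpr hs)]
    calc ‖f (x₀ + s • u) y - f x₀ y - s * d‖
        ≤ 4 * (‖y‖ / mm) * (‖u‖ / r) ^ 2 * ‖s‖ ^ 2 := hA s hsu'
    _ = 4 * (‖y‖ / mm) * (‖u‖ / r) ^ 2 * ‖s‖ * ‖s‖ := by ring
  have hps : ‖u‖ / r * ‖s‖ ≤ 1 / 2 := by
    rw [div_mul_eq_mul_div, div_le_div_iff₀ hr (by norm_num : (0:ℝ) < 2)]
    calc ‖u‖ * ‖s‖ * 2 = (‖s‖ * ‖u‖) * 2 := by ring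
    _ ≤ r / 2 * 2 := by linarith
    _ = 1 * r := by ring
  have hM : (0:ℝ) ≤ ‖y‖ / mm := by positivity
  have hp : (0:ℝ) ≤ ‖u‖ / r := by positivity
  calc ‖(f (x₀ + s • u) y - f x₀ y) / s‖
      ≤ ‖(f (x₀ + s • u) y - f x₀ y - s * d) / s‖ + ‖d‖ := by
        rw [hid]; exact norm_add_le _ _
  _ ≤ 4 * (‖y‖ / mm) * (‖u‖ / r) ^ 2 * ‖s‖ + 2 * (‖y‖ / mm) * (‖u‖ / r) :=
      add_le_add h1 hD
  _ ≤ 4 * (‖y‖ / mm) * (‖u‖ / r) := by nlinarith [mul_nonneg hM hp, norm_nonneg s]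

lemma keyMixed {f : E → F →L[ℂ] ℂ} (hf : DifferentiableOn ℂ f U)
    (hfb : ∀ z ∈ U, v z * ‖f z‖ ≤ 1) (hv : ∀ z ∈ U, 0 < v z)
    {x₀ : E} {r mm : ℝ} (hr : 0 < r) (hm : 0 < mm)
    (hball : ball x₀ r ⊆ U) (hvm : ∀ z ∈ ball x₀ r, mm ≤ v z) (u u' : E) (y : F)
    {t : ℂ} (htu : ‖t‖ * (‖u‖ + ‖u'‖) < r) :
    ‖f (x₀ + t • (u + u')) y - f (x₀ + t • u) y - f (x₀ + t • u') y + f x₀ y‖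
      ≤ 4 * (‖y‖ / mm) * ((‖u‖ + ‖u'‖) / r) ^ 2 * ‖t‖ ^ 2 := by
  set q : ℝ := ‖u‖ + ‖u'‖ with hq
  rcases eq_or_lt_of_le (add_nonneg (norm_nonneg u) (norm_nonneg u') : (0:ℝ) ≤ q) with h0 | h0
  · have hu : u = 0 := norm_eq_zero.mp (by linarith [norm_nonneg u, norm_nonneg u'])
    have hu' : u' = 0 := norm_eq_zero.mp (by linarith [norm_nonneg u, norm_nonneg u'])
    subst hu; subst hu'
    simp only [add_zero, smul_zero]
    have : f x₀ y - f x₀ y - f x₀ y + f x₀ y = 0 := by ring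
    rw [this, norm_zero]
    positivity
  · set ρ : ℝ := r / q with hρd
    have hρ : 0 < ρ := div_pos hr h0
    have hρq : ρ * q = r := div_mul_cancel₀ _ h0.ne'
    have hb1 : ρ * ‖u + u'‖ ≤ r := by
      calc ρ * ‖u + u'‖ ≤ ρ * q := mul_le_mul_of_nonneg_left (norm_add_le u u') hρ.le
      _ = r := hρq
    have hb2 : ρ * ‖u‖ ≤ r := by
      calc ρ * ‖u‖ ≤ ρ * q := by
            refine mul_le_mul_of_nonneg_left ?_ hρ.le
            rw [hq]; linarith [norm_nonneg u']
      _ = r := hρq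
    have hb3 : ρ * ‖u'‖ ≤ r := by
      calc ρ * ‖u'‖ ≤ ρ * q := by
            refine mul_le_mul_of_nonneg_left ?_ hρ.le
            rw [hq]; linarith [norm_nonneg u]
      _ = r := hρq
    set ψ : ℂ → ℂ := fun s =>
      f (x₀ + s • (u + u')) y - f (x₀ + s • u) y - f (x₀ + s • u') y + f x₀ y with hψd
    have hdψ : DifferentiableOn ℂ ψ (ball 0 ρ) :=
      (((Gdiff hf hr hball (u + u') y hb1).sub (Gdiff hf hr hball u y hb2)).sub
        (Gdiff hf hr hball u' y hb3)).add_const _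
    have hbψ : ∀ z ∈ ball (0:ℂ) ρ, ‖ψ z‖ ≤ 4 * (‖y‖ / mm) := by
      intro z hz
      have g1 := Gbound hfb hv hr hm hball hvm (u + u') y hb1 z hz
      have g2 := Gbound hfb hv hr hm hball hvm u y hb2 z hz
      have g3 := Gbound hfb hv hr hm hball hvm u' y hb3 z hz
      have g4 : ‖f x₀ y‖ ≤ ‖y‖ / mm := by
        have := Gbound hfb hv hr hm hball hvm u y hb2 0 (mem_ball_self hρ)
        simpa using this
      have n1 := norm_sub_le (f (x₀ + z • (u + u')) y - f (x₀ + z • u) y) (f (x₀ + z • u') y)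
      have n2 := norm_sub_le (f (x₀ + z • (u + u')) y) (f (x₀ + z • u) y)
      have n3 := norm_add_le (f (x₀ + z • (u + u')) y - f (x₀ + z • u) y - f (x₀ + z • u') y) (f x₀ y)
      have hzeq : ‖ψ z‖ = ‖f (x₀ + z • (u + u')) y - f (x₀ + z • u) y - f (x₀ + z • u') y + f x₀ y‖ := rfl
      rw [hzeq]
      linarith
    have hψ0 : ψ 0 = 0 := by
      rw [hψd]
      simp only [zero_smul, add_zero]
      ring
    have hfx₀ : DifferentiableAt ℂ f x₀ :=
      (hf.mono hball).differentiableAt (isOpen_ball.mem_nhds (mem_ball_self hr))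
    have hψder : deriv ψ 0 = 0 := by
      have h1 := hasDerivAt_slice hfx₀ (u + u') y
      have h2 := hasDerivAt_slice hfx₀ u y
      have h3 := hasDerivAt_slice hfx₀ u' y
      have hψ : HasDerivAt ψ (((fderiv ℂ f x₀ (u + u')) y - (fderiv ℂ f x₀ u) y)
          - (fderiv ℂ f x₀ u') y) 0 := ((h1.sub h2).sub h3).add_const _
      rw [hψ.deriv, map_add]
      simp only [ContinuousLinearMap.add_apply]
      ring
    have hmem : t ∈ ball (0:ℂ) ρ := by
      rw [mem_ball, dist_zero_right, hρd, lt_div_iff₀ h0]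
      exact htu
    have := schwarz_quad hρ hdψ hbψ hψ0 hψder t hmem
    show ‖ψ t‖ ≤ 4 * (‖y‖ / mm) * (q / r) ^ 2 * ‖t‖ ^ 2
    calc ‖ψ t‖ ≤ 4 * (‖y‖ / mm) / ρ ^ 2 * ‖t‖ ^ 2 := this
    _ = 4 * (‖y‖ / mm) * (q / r) ^ 2 * ‖t‖ ^ 2 := by
        rw [hρd, div_pow, div_div_eq_mul_div, div_pow]
        ring

end Aux2

set_option maxHeartbeats 1600000 in
/-- `(Hv(U,F*), ‖·‖_v)` is isometrically isomorphic to the dual of the completion of the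
space of `F`-valued `Hv`-molecules under the norm inherited from `Hv(U,F*)*`.  First
conjunct: `‖f‖_v ≤ C` iff the associated functional `Λ(f)` is bounded by `C` on molecules
(isometric embedding).  Second conjunct: every bounded functional on the molecules,
recorded by its values `φ(x,y) = Φ(δ_x ⊗ y)` on generators, arises from some
`f ∈ Hv(U,F*)` (surjectivity, with inverse `⟨Λ⁻¹(Φ)(x), y⟩ = Φ(δ_x ⊗ y)`). -/
theorem stmt19 {E F : Type*} [NormedAddCommGroup E] [NormedSpace ℂ E] [CompleteSpace E]
    [NormedAddCommGroup F] [NormedSpace ℂ F] [CompleteSpace F]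
    (U : Set E) (hU : IsOpen U) (v : E → ℝ) (hv : ∀ x ∈ U, 0 < v x)
    (hvc : ContinuousOn v U) :
    (∀ f : E → (F →L[ℂ] ℂ), DifferentiableOn ℂ f U → ∀ C : ℝ, 0 ≤ C →
      ((∀ x ∈ U, v x * ‖f x‖ ≤ C) ↔
        ∀ (n : ℕ) (lam : Fin n → ℂ) (x : Fin n → E) (y : Fin n → F), (∀ i, x i ∈ U) →
          ‖molAct v lam x y f‖ ≤ C * molNorm v U lam x y)) ∧
    (∀ (φ : E → F → ℂ) (K : ℝ), 0 ≤ K →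
      (∀ (n : ℕ) (lam : Fin n → ℂ) (x : Fin n → E) (y : Fin n → F), (∀ i, x i ∈ U) →
        ‖∑ i, lam i * (v (x i) : ℂ) * φ (x i) (y i)‖ ≤ K * molNorm v U lam x y) →
      ∃ f : E → (F →L[ℂ] ℂ), DifferentiableOn ℂ f U ∧
        (∀ x ∈ U, v x * ‖f x‖ ≤ K) ∧
        ∀ x ∈ U, ∀ y : F, φ x y = (f x) y) := by
  classical
  constructor
  · intro f hf C hC
    constructor
    · intro hb n lam x y hx
      rcases eq_or_lt_of_le hC with hC0 | hC0
      · have hf0 : ∀ i, f (x i) = 0 := by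
          intro i
          have h1 := hb (x i) (hx i)
          have h2 := hv (x i) (hx i)
          have h3 : ‖f (x i)‖ ≤ 0 := by nlinarith [norm_nonneg (f (x i))]
          exact norm_le_zero_iff.mp h3
        have hz : molAct v lam x y f = 0 := by
          unfold molAct
          refine Finset.sum_eq_zero fun i _ => ?_
          rw [hf0 i]
          simp
        rw [hz, norm_zero, ← hC0, zero_mul]
      · set c : ℂ := ((C⁻¹ : ℝ) : ℂ) with hc
        set g : E → F →L[ℂ] ℂ := fun z => c • f z with hg
        have hgd : DifferentiableOn ℂ g U := hf.const_smul c
        have hcn : ‖c‖ = C⁻¹ := by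
          rw [hc, Complex.norm_real, Real.norm_of_nonneg (inv_nonneg.mpr hC)]
        have hgb : ∀ z ∈ U, v z * ‖g z‖ ≤ 1 := by
          intro z hz
          have he : ‖g z‖ = C⁻¹ * ‖f z‖ := by
            show ‖c • f z‖ = C⁻¹ * ‖f z‖
            rw [norm_smul c (f z), hcn]
          rw [he]
          have h1 := hb z hz
          calc v z * (C⁻¹ * ‖f z‖) = C⁻¹ * (v z * ‖f z‖) := by ring
          _ ≤ C⁻¹ * C := mul_le_mul_of_nonneg_left h1 (inv_nonneg.mpr hC)
          _ = 1 := inv_mul_cancel₀ hC0.ne'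
        have hact : molAct v lam x y g = c * molAct v lam x y f := by
          unfold molAct
          rw [Finset.mul_sum]
          refine Finset.sum_congr rfl fun i _ => ?_
          show lam i * ((v (x i) : ℝ) : ℂ) * (c • f (x i)) (y i) = _
          simp only [ContinuousLinearMap.smul_apply, smul_eq_mul]
          ring
        have hle : ‖molAct v lam x y g‖ ≤ molNorm v U lam x y :=
          le_csSup (molNorm_bddAbove hv hx) ⟨g, hgd, hgb, rfl⟩
        have heq : ‖molAct v lam x y f‖ = C * ‖molAct v lam x y g‖ := by
          rw [hact, norm_mul, hcn, ← mul_assoc, mul_inv_cancel₀ hC0.ne', one_mul]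
        rw [heq]
        exact mul_le_mul_of_nonneg_left hle hC
    · intro hmol z hz
      have hvz := hv z hz
      have hbnd : ∀ y : F, ‖f z y‖ ≤ (C / v z) * ‖y‖ := by
        intro y
        have h1 := hmol 1 ![1] ![z] ![y] (fun i => by fin_cases i <;> exact hz)
        have h2 : molAct v ![(1:ℂ)] ![z] ![y] f = ((v z : ℝ) : ℂ) * f z y := by
          unfold molAct
          rw [Fin.sum_univ_one]
          simp
        have h3 : molNorm v U ![(1:ℂ)] ![z] ![y] ≤ ‖y‖ := by
          refine molNorm_le (norm_nonneg y) fun g hg1 hg2 => ?_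
          have h4 : molAct v ![(1:ℂ)] ![z] ![y] g = ((v z : ℝ) : ℂ) * g z y := by
            unfold molAct
            rw [Fin.sum_univ_one]
            simp
          rw [h4, norm_mul, Complex.norm_real, Real.norm_of_nonneg hvz.le]
          exact fz_le hg2 hz hvz y
        rw [h2, norm_mul, Complex.norm_real, Real.norm_of_nonneg hvz.le] at h1
        have h5 : v z * ‖f z y‖ ≤ C * ‖y‖ :=
          le_trans h1 (mul_le_mul_of_nonneg_left h3 hC)
        rw [div_mul_eq_mul_div, le_div_iff₀ hvz]
        linarith
      have hop : ‖f z‖ ≤ C / v z :=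
        (f z).opNorm_le_bound (div_nonneg hC hvz.le) hbnd
      calc v z * ‖f z‖ ≤ v z * (C / v z) := mul_le_mul_of_nonneg_left hop hvz.le
      _ = C := by field_simp
  · intro φ K hK hmol
    have hvne : ∀ z ∈ U, ((v z : ℝ) : ℂ) ≠ 0 := fun z hz =>
      Complex.ofReal_ne_zero.mpr (hv z hz).ne'
    have hadd : ∀ z ∈ U, ∀ y₁ y₂ : F, φ z (y₁ + y₂) = φ z y₁ + φ z y₂ := by
      intro z hz y₁ y₂
      set lam : Fin 3 → ℂ := ![1 / (v z : ℂ), 1 / (v z : ℂ), -(1 / (v z : ℂ))] with hlam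
      have hid : ∀ ψ : E → F → ℂ,
          (∑ i, lam i * (v (![z, z, z] i) : ℂ) * ψ (![z, z, z] i) (![y₁, y₂, y₁ + y₂] i))
            = ψ z y₁ + ψ z y₂ - ψ z (y₁ + y₂) := by
        intro ψ
        rw [Fin.sum_univ_three]
        simp only [hlam, Matrix.cons_val_zero, Matrix.cons_val_one, Matrix.head_cons,
          Matrix.cons_val_two, Matrix.tail_cons]
        field_simp [hvne z hz]
        ring
      have h1 := hmol 3 lam ![z, z, z] ![y₁, y₂, y₁ + y₂]
        (fun i => by fin_cases i <;> exact hz)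
      have h2 : molNorm v U lam ![z, z, z] ![y₁, y₂, y₁ + y₂] ≤ 0 := by
        refine molNorm_le le_rfl fun g hg1 hg2 => ?_
        have h3 : molAct v lam ![z, z, z] ![y₁, y₂, y₁ + y₂] g = 0 := by
          unfold molAct
          rw [hid (fun a b => g a b), map_add]
          ring
        rw [h3, norm_zero]
      rw [hid φ] at h1
      have h4 : ‖φ z y₁ + φ z y₂ - φ z (y₁ + y₂)‖ ≤ 0 := by
        calc ‖φ z y₁ + φ z y₂ - φ z (y₁ + y₂)‖ ≤ K * molNorm v U lam ![z,z,z] ![y₁,y₂,y₁+y₂] := h1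
        _ ≤ K * 0 := mul_le_mul_of_nonneg_left h2 hK
        _ = 0 := mul_zero K
      have h5 := norm_le_zero_iff.mp h4
      have h6 : φ z y₁ + φ z y₂ - φ z (y₁ + y₂) = 0 := h5
      linear_combination -h6
    have hsmul : ∀ z ∈ U, ∀ (a : ℂ) (y : F), φ z (a • y) = a * φ z y := by
      intro z hz a y
      set lam : Fin 2 → ℂ := ![1 / (v z : ℂ), -(a / (v z : ℂ))] with hlam
      have hid : ∀ ψ : E → F → ℂ,
          (∑ i, lam i * (v (![z, z] i) : ℂ) * ψ (![z, z] i) (![a • y, y] i))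
            = ψ z (a • y) - a * ψ z y := by
        intro ψ
        rw [Fin.sum_univ_two]
        simp only [hlam, Matrix.cons_val_zero, Matrix.cons_val_one, Matrix.head_cons]
        field_simp [hvne z hz]
        ring
      have h1 := hmol 2 lam ![z, z] ![a • y, y] (fun i => by fin_cases i <;> exact hz)
      have h2 : molNorm v U lam ![z, z] ![a • y, y] ≤ 0 := by
        refine molNorm_le le_rfl fun g hg1 hg2 => ?_
        have h3 : molAct v lam ![z, z] ![a • y, y] g = 0 := by
          unfold molAct
          rw [hid (fun b c => g b c), (g z).map_smul]
          simp only [smul_eq_mul]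
          ring
        rw [h3, norm_zero]
      rw [hid φ] at h1
      have h4 : ‖φ z (a • y) - a * φ z y‖ ≤ 0 := by
        calc ‖φ z (a • y) - a * φ z y‖ ≤ K * molNorm v U lam ![z,z] ![a • y, y] := h1
        _ ≤ K * 0 := mul_le_mul_of_nonneg_left h2 hK
        _ = 0 := mul_zero K
      have h6 : φ z (a • y) - a * φ z y = 0 := norm_le_zero_iff.mp h4
      linear_combination h6
    have hbound : ∀ z ∈ U, ∀ y : F, ‖φ z y‖ ≤ (K / v z) * ‖y‖ := by
      intro z hz y
      have hvz := hv z hz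
      set lam : Fin 1 → ℂ := ![1 / (v z : ℂ)] with hlam
      have hid : ∀ ψ : E → F → ℂ,
          (∑ i, lam i * (v (![z] i) : ℂ) * ψ (![z] i) (![y] i)) = ψ z y := by
        intro ψ
        rw [Fin.sum_univ_one]
        simp only [hlam, Matrix.cons_val_zero]
        field_simp [hvne z hz]
      have h1 := hmol 1 lam ![z] ![y] (fun i => by fin_cases i <;> exact hz)
      have h2 : molNorm v U lam ![z] ![y] ≤ ‖y‖ / v z := by
        refine molNorm_le (div_nonneg (norm_nonneg y) hvz.le) fun g hg1 hg2 => ?_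
        have h3 : molAct v lam ![z] ![y] g = g z y := by
          unfold molAct
          exact hid (fun b c => g b c)
        rw [h3, le_div_iff₀ hvz, mul_comm]
        exact fz_le hg2 hz hvz y
      rw [hid φ] at h1
      calc ‖φ z y‖ ≤ K * (‖y‖ / v z) := le_trans h1 (mul_le_mul_of_nonneg_left h2 hK)
      _ = (K / v z) * ‖y‖ := by ring
    let fl : ∀ z : E, z ∈ U → (F →L[ℂ] ℂ) := fun z hz =>
      LinearMap.mkContinuous
        { toFun := φ z
          map_add' := fun y₁ y₂ => hadd z hz y₁ y₂
          map_smul' := fun a y => by simpa using hsmul z hz a y }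
        (K / v z) (fun y => hbound z hz y)
    set f : E → F →L[ℂ] ℂ := fun z => if hz : z ∈ U then fl z hz else 0 with hfdef
    have hfval : ∀ z ∈ U, ∀ y : F, f z y = φ z y := by
      intro z hz y
      have : f z = fl z hz := by rw [hfdef]; simp only [dif_pos hz]
      rw [this]
      rfl
    have hfnorm : ∀ z ∈ U, v z * ‖f z‖ ≤ K := by
      intro z hz
      have hvz := hv z hz
      have h1 : f z = fl z hz := by rw [hfdef]; simp only [dif_pos hz]
      have h2 : ‖f z‖ ≤ K / v z := by
        rw [h1]
        exact LinearMap.mkContinuous_norm_le _ (div_nonneg hK hvz.le) _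
      calc v z * ‖f z‖ ≤ v z * (K / v z) := mul_le_mul_of_nonneg_left h2 hvz.le
      _ = K := by field_simp
    have hfb1 : ∀ gg : E → F →L[ℂ] ℂ, True := fun _ => trivial
    have hdiff : ∀ x₀, x₀ ∈ U → DifferentiableAt ℂ f x₀ := by
      intro x₀ hx₀
      obtain ⟨r, hr, hball, hvm⟩ :
          ∃ r, 0 < r ∧ Metric.ball x₀ r ⊆ U ∧ ∀ z ∈ Metric.ball x₀ r, v x₀ / 2 ≤ v z := by
        have hc : ContinuousAt v x₀ := hvc.continuousAt (hU.mem_nhds hx₀)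
        have h1 : v ⁻¹' Set.Ioi (v x₀ / 2) ∈ 𝓝 x₀ :=
          hc (Ioi_mem_nhds (by linarith [hv x₀ hx₀]))
        have h2 := Filter.inter_mem h1 (hU.mem_nhds hx₀)
        rcases Metric.mem_nhds_iff.mp h2 with ⟨r, hr0, hrb⟩
        exact ⟨r, hr0, fun z hz => (hrb hz).2, fun z hz => le_of_lt (hrb hz).1⟩
      set mm : ℝ := v x₀ / 2 with hmmd
      have hm : 0 < mm := by rw [hmmd]; linarith [hv x₀ hx₀]
      have hmemB : ∀ (s : ℂ) (u : E), ‖s‖ * ‖u‖ < r → x₀ + s • u ∈ Metric.ball x₀ r := by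
        intro s u hsu
        rw [Metric.mem_ball, dist_eq_norm, add_sub_cancel_left, norm_smul]
        exact hsu
      have hmemU : ∀ (s : ℂ) (u : E), ‖s‖ * ‖u‖ < r → x₀ + s • u ∈ U :=
        fun s u hsu => hball (hmemB s u hsu)
      have hC0 : ∀ (u : E) (y : F) (s : ℂ), s ≠ 0 → ‖s‖ * ‖u‖ ≤ r / 2 →
          ‖(φ (x₀ + s • u) y - φ x₀ y) / s‖ ≤ K * (4 * (‖y‖ / mm) * (‖u‖ / r)) := by
        intro u y s hs hsu
        have hsu' : ‖s‖ * ‖u‖ < r := lt_of_le_of_lt hsu (by linarith)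
        have hzU : x₀ + s • u ∈ U := hmemU s u hsu'
        set lam : Fin 2 → ℂ :=
          ![1 / (s * (v (x₀ + s • u) : ℂ)), -(1 / (s * (v x₀ : ℂ)))] with hlam
        have hid : ∀ ψ : E → F → ℂ,
            (∑ i, lam i * (v (![x₀ + s • u, x₀] i) : ℂ)
              * ψ (![x₀ + s • u, x₀] i) (![y, y] i))
              = (ψ (x₀ + s • u) y - ψ x₀ y) / s := by
          intro ψ
          rw [Fin.sum_univ_two]
          simp only [hlam, Matrix.cons_val_zero, Matrix.cons_val_one, Matrix.head_cons]
          have e1 : ((v (x₀ + s • u) : ℝ) : ℂ) ≠ 0 := hvne _ hzU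
          have e2 : ((v x₀ : ℝ) : ℂ) ≠ 0 := hvne _ hx₀
          simp only [neg_mul]
          rw [coef1 e1, coef1 e2]
          ring
        have h1 := hmol 2 lam ![x₀ + s • u, x₀] ![y, y]
          (fun i => by
            fin_cases i
            · exact hzU
            · exact hx₀)
        have hBnn : (0:ℝ) ≤ 4 * (‖y‖ / mm) * (‖u‖ / r) :=
          mul_nonneg (mul_nonneg (by norm_num) (div_nonneg (norm_nonneg _) hm.le))
            (div_nonneg (norm_nonneg _) hr.le)
        have h2 : molNorm v U lam ![x₀ + s • u, x₀] ![y, y]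
            ≤ 4 * (‖y‖ / mm) * (‖u‖ / r) := by
          refine molNorm_le hBnn fun g hg1 hg2 => ?_
          have h3 : molAct v lam ![x₀ + s • u, x₀] ![y, y] g
              = (g (x₀ + s • u) y - g x₀ y) / s := by
            unfold molAct
            exact hid (fun b c => g b c)
          rw [h3]
          exact keyDQ1 hg1 hg2 hv hr hm hball hvm u y hs hsu
        rw [hid φ] at h1
        exact le_trans h1 (mul_le_mul_of_nonneg_left h2 hK)
      have hC1 : ∀ (u : E) (y : F) (s t : ℂ), s ≠ 0 → t ≠ 0 →
          ‖s‖ * ‖u‖ < r → ‖t‖ * ‖u‖ < r →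
          ‖(φ (x₀ + s • u) y - φ x₀ y) / s - (φ (x₀ + t • u) y - φ x₀ y) / t‖
            ≤ K * (4 * (‖y‖ / mm) * (‖u‖ / r) ^ 2) * (‖s‖ + ‖t‖) := by
        intro u y s t hs ht hsu htu
        have hz1 : x₀ + s • u ∈ U := hmemU s u hsu
        have hz2 : x₀ + t • u ∈ U := hmemU t u htu
        set lam : Fin 4 → ℂ := ![1 / (s * (v (x₀ + s • u) : ℂ)), -(1 / (s * (v x₀ : ℂ))),
          -(1 / (t * (v (x₀ + t • u) : ℂ))), 1 / (t * (v x₀ : ℂ))] with hlam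
        have hid : ∀ ψ : E → F → ℂ,
            (∑ i, lam i * (v (![x₀ + s • u, x₀, x₀ + t • u, x₀] i) : ℂ)
              * ψ (![x₀ + s • u, x₀, x₀ + t • u, x₀] i) (![y, y, y, y] i))
              = (ψ (x₀ + s • u) y - ψ x₀ y) / s - (ψ (x₀ + t • u) y - ψ x₀ y) / t := by
          intro ψ
          rw [Fin.sum_univ_four]
          simp only [hlam, Matrix.cons_val_zero, Matrix.cons_val_one, Matrix.head_cons,
            Matrix.cons_val_two, Matrix.tail_cons, Matrix.cons_val_three]
          have e1 : ((v (x₀ + s • u) : ℝ) : ℂ) ≠ 0 := hvne _ hz1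
          have e2 : ((v x₀ : ℝ) : ℂ) ≠ 0 := hvne _ hx₀
          have e3 : ((v (x₀ + t • u) : ℝ) : ℂ) ≠ 0 := hvne _ hz2
          simp only [neg_mul]
          rw [coef1 e1, coef1 e2, coef1 e3, coef1 e2]
          ring
        have h1 := hmol 4 lam ![x₀ + s • u, x₀, x₀ + t • u, x₀] ![y, y, y, y]
          (fun i => by
            fin_cases i
            · exact hz1
            · exact hx₀
            · exact hz2
            · exact hx₀)
        have hBnn : (0:ℝ) ≤ 4 * (‖y‖ / mm) * (‖u‖ / r) ^ 2 * (‖s‖ + ‖t‖) := by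
          have := hm
          have := hr
          positivity
        have h2 : molNorm v U lam ![x₀ + s • u, x₀, x₀ + t • u, x₀] ![y, y, y, y]
            ≤ 4 * (‖y‖ / mm) * (‖u‖ / r) ^ 2 * (‖s‖ + ‖t‖) := by
          refine molNorm_le hBnn fun g hg1 hg2 => ?_
          have h3 : molAct v lam ![x₀ + s • u, x₀, x₀ + t • u, x₀] ![y, y, y, y] g
              = (g (x₀ + s • u) y - g x₀ y) / s - (g (x₀ + t • u) y - g x₀ y) / t := by
            unfold molAct
            exact hid (fun b c => g b c)
          rw [h3]
          exact keyDQ2 hg1 hg2 hv hr hm hball hvm u y hs ht hsu htu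
        rw [hid φ] at h1
        calc ‖(φ (x₀ + s • u) y - φ x₀ y) / s - (φ (x₀ + t • u) y - φ x₀ y) / t‖
            ≤ K * molNorm v U lam ![x₀ + s • u, x₀, x₀ + t • u, x₀] ![y, y, y, y] := h1
        _ ≤ K * (4 * (‖y‖ / mm) * (‖u‖ / r) ^ 2 * (‖s‖ + ‖t‖)) :=
            mul_le_mul_of_nonneg_left h2 hK
        _ = K * (4 * (‖y‖ / mm) * (‖u‖ / r) ^ 2) * (‖s‖ + ‖t‖) := by ring
      have hC2 : ∀ (u u' : E) (y : F) (t : ℂ), ‖t‖ * (‖u‖ + ‖u'‖) < r →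
          ‖φ (x₀ + t • (u + u')) y - φ (x₀ + t • u) y - φ (x₀ + t • u') y + φ x₀ y‖
            ≤ K * (4 * (‖y‖ / mm) * ((‖u‖ + ‖u'‖) / r) ^ 2) * ‖t‖ ^ 2 := by
        intro u u' y t htu
        have hn1 : ‖t‖ * ‖u + u'‖ < r :=
          lt_of_le_of_lt (mul_le_mul_of_nonneg_left (norm_add_le u u') (norm_nonneg t)) htu
        have hn2 : ‖t‖ * ‖u‖ < r := by
          refine lt_of_le_of_lt ?_ htu
          refine mul_le_mul_of_nonneg_left ?_ (norm_nonneg t)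
          linarith [norm_nonneg u']
        have hn3 : ‖t‖ * ‖u'‖ < r := by
          refine lt_of_le_of_lt ?_ htu
          refine mul_le_mul_of_nonneg_left ?_ (norm_nonneg t)
          linarith [norm_nonneg u]
        have hz1 : x₀ + t • (u + u') ∈ U := hmemU t (u + u') hn1
        have hz2 : x₀ + t • u ∈ U := hmemU t u hn2
        have hz3 : x₀ + t • u' ∈ U := hmemU t u' hn3
        set lam : Fin 4 → ℂ := ![1 / (v (x₀ + t • (u + u')) : ℂ),
          -(1 / (v (x₀ + t • u) : ℂ)), -(1 / (v (x₀ + t • u') : ℂ)), 1 / (v x₀ : ℂ)] with hlam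
        have hid : ∀ ψ : E → F → ℂ,
            (∑ i, lam i * (v (![x₀ + t • (u + u'), x₀ + t • u, x₀ + t • u', x₀] i) : ℂ)
              * ψ (![x₀ + t • (u + u'), x₀ + t • u, x₀ + t • u', x₀] i) (![y, y, y, y] i))
              = ψ (x₀ + t • (u + u')) y - ψ (x₀ + t • u) y - ψ (x₀ + t • u') y + ψ x₀ y := by
          intro ψ
          rw [Fin.sum_univ_four]
          simp only [hlam, Matrix.cons_val_zero, Matrix.cons_val_one, Matrix.head_cons,
            Matrix.cons_val_two, Matrix.tail_cons, Matrix.cons_val_three]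
          have e1 : ((v (x₀ + t • (u + u')) : ℝ) : ℂ) ≠ 0 := hvne _ hz1
          have e2 : ((v (x₀ + t • u) : ℝ) : ℂ) ≠ 0 := hvne _ hz2
          have e3 : ((v (x₀ + t • u') : ℝ) : ℂ) ≠ 0 := hvne _ hz3
          have e4 : ((v x₀ : ℝ) : ℂ) ≠ 0 := hvne _ hx₀
          simp only [neg_mul]
          rw [coef0 e1, coef0 e2, coef0 e3, coef0 e4]
          ring
        have h1 := hmol 4 lam ![x₀ + t • (u + u'), x₀ + t • u, x₀ + t • u', x₀] ![y, y, y, y]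
          (fun i => by
            fin_cases i
            · exact hz1
            · exact hz2
            · exact hz3
            · exact hx₀)
        have hBnn : (0:ℝ) ≤ 4 * (‖y‖ / mm) * ((‖u‖ + ‖u'‖) / r) ^ 2 * ‖t‖ ^ 2 := by
          have := hm
          positivity
        have h2 : molNorm v U lam ![x₀ + t • (u + u'), x₀ + t • u, x₀ + t • u', x₀]
            ![y, y, y, y] ≤ 4 * (‖y‖ / mm) * ((‖u‖ + ‖u'‖) / r) ^ 2 * ‖t‖ ^ 2 := by
          refine molNorm_le hBnn fun g hg1 hg2 => ?_
          have h3 : molAct v lam ![x₀ + t • (u + u'), x₀ + t • u, x₀ + t • u', x₀]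
              ![y, y, y, y] g
              = g (x₀ + t • (u + u')) y - g (x₀ + t • u) y - g (x₀ + t • u') y + g x₀ y := by
            unfold molAct
            exact hid (fun b c => g b c)
          rw [h3]
          exact keyMixed hg1 hg2 hv hr hm hball hvm u u' y htu
        rw [hid φ] at h1
        calc ‖φ (x₀ + t • (u + u')) y - φ (x₀ + t • u) y - φ (x₀ + t • u') y + φ x₀ y‖
            ≤ K * molNorm v U lam ![x₀ + t • (u + u'), x₀ + t • u, x₀ + t • u', x₀]
              ![y, y, y, y] := h1
        _ ≤ K * (4 * (‖y‖ / mm) * ((‖u‖ + ‖u'‖) / r) ^ 2 * ‖t‖ ^ 2) :=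
            mul_le_mul_of_nonneg_left h2 hK
        _ = K * (4 * (‖y‖ / mm) * ((‖u‖ + ‖u'‖) / r) ^ 2) * ‖t‖ ^ 2 := by ring
      have htend0 : ∀ c : ℝ, Tendsto (fun n : ℕ => c / ((n:ℝ) + 1)) atTop (𝓝 0) := by
        intro c
        have h2 := tendsto_one_div_add_atTop_nhds_zero_nat.const_mul c
        simpa [mul_one_div, div_eq_mul_inv] using h2
      set σ : E → ℕ → ℂ := fun u n => ((r / (2 * (‖u‖ + 1)) / ((n:ℝ) + 1) : ℝ) : ℂ) with hσd
      have hσpos : ∀ (u : E) (n : ℕ), 0 < r / (2 * (‖u‖ + 1)) / ((n:ℝ) + 1) := by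
        intro u n
        have h1 : (0:ℝ) < ‖u‖ + 1 := by positivity
        positivity
      have hσ0 : ∀ (u : E) (n : ℕ), σ u n ≠ 0 := fun u n =>
        Complex.ofReal_ne_zero.mpr (hσpos u n).ne'
      have hσn : ∀ (u : E) (n : ℕ), ‖σ u n‖ = r / (2 * (‖u‖ + 1)) / ((n:ℝ) + 1) := by
        intro u n
        rw [hσd]
        simp only
        rw [Complex.norm_real, Real.norm_of_nonneg (hσpos u n).le]
      have hσle : ∀ (u : E) (n : ℕ), ‖σ u n‖ * ‖u‖ ≤ r / 2 := by
        intro u n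
        rw [hσn]
        have h1 : (0:ℝ) < ‖u‖ + 1 := by positivity
        have h2 : (1:ℝ) ≤ (n:ℝ) + 1 := by linarith [Nat.cast_nonneg (α := ℝ) n]
        have h3 : r / (2 * (‖u‖ + 1)) / ((n:ℝ) + 1) ≤ r / (2 * (‖u‖ + 1)) :=
          div_le_self (by positivity) h2
        have h4 : r / (2 * (‖u‖ + 1)) * ‖u‖ ≤ r / 2 := by
          rw [div_mul_eq_mul_div, div_le_div_iff₀ (by positivity) two_pos]
          nlinarith [norm_nonneg u, hr.le]
        calc r / (2 * (‖u‖ + 1)) / ((n:ℝ) + 1) * ‖u‖ ≤ r / (2 * (‖u‖ + 1)) * ‖u‖ :=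
              mul_le_mul_of_nonneg_right h3 (norm_nonneg u)
        _ ≤ r / 2 := h4
      have hσlt : ∀ (u : E) (n : ℕ), ‖σ u n‖ * ‖u‖ < r :=
        fun u n => lt_of_le_of_lt (hσle u n) (half_lt_self hr)
      have hσtend : ∀ u : E, Tendsto (fun n => ‖σ u n‖) atTop (𝓝 0) := by
        intro u
        refine (htend0 (r / (2 * (‖u‖ + 1)))).congr fun n => ?_
        rw [hσn]
      set Q : E → F → ℕ → ℂ := fun u y n => (φ (x₀ + σ u n • u) y - φ x₀ y) / σ u n with hQd
      have hcauchy : ∀ (u : E) (y : F), ∃ L : ℂ, Tendsto (Q u y) atTop (𝓝 L) := by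
        intro u y
        refine cauchySeq_tendsto_of_complete ?_
        have hKC : 0 ≤ K * (4 * (‖y‖ / mm) * (‖u‖ / r) ^ 2) :=
          mul_nonneg hK (mul_nonneg (mul_nonneg (by norm_num)
            (div_nonneg (norm_nonneg _) hm.le)) (sq_nonneg _))
        refine cauchySeq_of_le_tendsto_0
          (fun N => K * (4 * (‖y‖ / mm) * (‖u‖ / r) ^ 2)
            * (2 * (r / (2 * (‖u‖ + 1)) / ((N:ℝ) + 1)))) ?_ ?_
        · intro n p N hn hp
          rw [dist_eq_norm]
          have h1 := hC1 u y (σ u n) (σ u p) (hσ0 u n) (hσ0 u p) (hσlt u n) (hσlt u p)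
          refine le_trans h1 ?_
          refine mul_le_mul_of_nonneg_left ?_ hKC
          have hmono : ∀ k : ℕ, N ≤ k →
              ‖σ u k‖ ≤ r / (2 * (‖u‖ + 1)) / ((N:ℝ) + 1) := by
            intro k hk
            rw [hσn]
            refine div_le_div_of_nonneg_left (by positivity) (by positivity) ?_
            have : (N:ℝ) ≤ (k:ℝ) := Nat.cast_le.mpr hk
            linarith
          have e1 := hmono n hn
          have e2 := hmono p hp
          linarith
        · have h2 := ((htend0 (r / (2 * (‖u‖ + 1)))).const_mul 2).const_mul
            (K * (4 * (‖y‖ / mm) * (‖u‖ / r) ^ 2))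
          simpa using h2
      set D : E → F → ℂ := fun u y => Classical.choose (hcauchy u y) with hDd
      have hD : ∀ (u : E) (y : F), Tendsto (Q u y) atTop (𝓝 (D u y)) := fun u y =>
        Classical.choose_spec (hcauchy u y)
      have hP1 : ∀ (u : E) (y : F) (s : ℂ), s ≠ 0 → ‖s‖ * ‖u‖ < r →
          ‖(φ (x₀ + s • u) y - φ x₀ y) / s - D u y‖
            ≤ K * (4 * (‖y‖ / mm) * (‖u‖ / r) ^ 2) * ‖s‖ := by
        intro u y s hs hsu
        have t1 : Tendsto (fun n => ‖(φ (x₀ + s • u) y - φ x₀ y) / s - Q u y n‖)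
            atTop (𝓝 ‖(φ (x₀ + s • u) y - φ x₀ y) / s - D u y‖) :=
          (tendsto_const_nhds.sub (hD u y)).norm
        have t2 : Tendsto
            (fun n => K * (4 * (‖y‖ / mm) * (‖u‖ / r) ^ 2) * (‖s‖ + ‖σ u n‖)) atTop
            (𝓝 (K * (4 * (‖y‖ / mm) * (‖u‖ / r) ^ 2) * (‖s‖ + 0))) :=
          (tendsto_const_nhds.add (hσtend u)).const_mul _
        rw [add_zero] at t2
        refine le_of_tendsto_of_tendsto' t1 t2 fun n => ?_
        exact hC1 u y s (σ u n) hs (hσ0 u n) hsu (hσlt u n)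
      have hP2 : ∀ (u : E) (y : F), ‖u‖ < r →
          ‖φ (x₀ + u) y - φ x₀ y - D u y‖ ≤ K * (4 * (‖y‖ / mm) * (‖u‖ / r) ^ 2) := by
        intro u y hur
        have h1 := hP1 u y 1 one_ne_zero (by rw [norm_one, one_mul]; exact hur)
        rw [one_smul, div_one, norm_one, mul_one] at h1
        exact h1
      have hP3 : ∀ (u : E) (y : F), ‖D u y‖ ≤ K * (4 * (‖y‖ / mm) * (‖u‖ / r)) := by
        intro u y
        refine le_of_tendsto' (hD u y).norm fun n => ?_
        exact hC0 u y (σ u n) (hσ0 u n) (hσle u n)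
      have hD0 : ∀ y : F, D 0 y = 0 := by
        intro y
        have h1 : Q 0 y = fun _ => (0:ℂ) := by
          funext n
          rw [hQd]
          simp
        have h2 := hD 0 y
        rw [h1] at h2
        exact tendsto_nhds_unique h2 tendsto_const_nhds
      have hhom : ∀ (a : ℂ) (u : E) (y : F), D (a • u) y = a * D u y := by
        intro a u y
        rcases eq_or_ne a 0 with rfl | ha
        · rw [zero_smul, hD0, zero_mul]
        rcases eq_or_ne u 0 with rfl | hu
        · rw [smul_zero, hD0, mul_zero]
        have key : Tendsto (fun n => (φ (x₀ + (σ (a • u) n * a) • u) y - φ x₀ y)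
            / (σ (a • u) n * a)) atTop (𝓝 (D u y)) := by
          rw [tendsto_iff_dist_tendsto_zero]
          have hb : ∀ n : ℕ, dist ((φ (x₀ + (σ (a • u) n * a) • u) y - φ x₀ y)
              / (σ (a • u) n * a)) (D u y)
              ≤ K * (4 * (‖y‖ / mm) * (‖u‖ / r) ^ 2) * (‖σ (a • u) n‖ * ‖a‖) := by
            intro n
            rw [dist_eq_norm]
            have hsa : σ (a • u) n * a ≠ 0 := mul_ne_zero (hσ0 _ n) ha
            have hsa2 : ‖σ (a • u) n * a‖ * ‖u‖ < r := by
              rw [norm_mul, mul_assoc, ← norm_smul a u]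
              exact hσlt (a • u) n
            have h5 := hP1 u y (σ (a • u) n * a) hsa hsa2
            rw [norm_mul] at h5
            exact h5
          refine squeeze_zero (fun n => dist_nonneg) hb ?_
          have h6 := ((hσtend (a • u)).mul_const ‖a‖).const_mul
            (K * (4 * (‖y‖ / mm) * (‖u‖ / r) ^ 2))
          simpa using h6
        have heq : (fun n => a * ((φ (x₀ + (σ (a • u) n * a) • u) y - φ x₀ y)
            / (σ (a • u) n * a))) = Q (a • u) y := by
          funext n
          rw [hQd]
          simp only
          rw [smul_smul]
          have hσn' := hσ0 (a • u) n
          field_simp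
        have h3 := key.const_mul a
        rw [heq] at h3
        exact tendsto_nhds_unique (hD (a • u) y) h3
      have hDaddu : ∀ (u u' : E) (y : F), D (u + u') y = D u y + D u' y := by
        intro u u' y
        set q : ℝ := ‖u‖ + ‖u'‖ with hqd
        have hq0 : 0 ≤ q := add_nonneg (norm_nonneg u) (norm_nonneg u')
        set cc : ℝ := r / (2 * (q + 1)) with hccd
        have hcc : 0 < cc := div_pos hr (by linarith)
        set τ : ℕ → ℂ := fun n => ((cc / ((n:ℝ) + 1) : ℝ) : ℂ) with hτd
        have hτpos : ∀ n : ℕ, 0 < cc / ((n:ℝ) + 1) := fun n => div_pos hcc (by positivity)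
        have hτ0 : ∀ n, τ n ≠ 0 := fun n => Complex.ofReal_ne_zero.mpr (hτpos n).ne'
        have hτn : ∀ n, ‖τ n‖ = cc / ((n:ℝ) + 1) := by
          intro n
          rw [hτd]
          simp only
          rw [Complex.norm_real, Real.norm_of_nonneg (hτpos n).le]
        have hτq : ∀ n, ‖τ n‖ * q ≤ r / 2 := by
          intro n
          rw [hτn]
          have h2 : (1:ℝ) ≤ (n:ℝ) + 1 := by linarith [Nat.cast_nonneg (α := ℝ) n]
          have h3 : cc / ((n:ℝ) + 1) ≤ cc := div_le_self hcc.le h2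
          have h4 : cc * q ≤ r / 2 := by
            rw [hccd, div_mul_eq_mul_div, div_le_div_iff₀ (by linarith) two_pos]
            nlinarith
          calc cc / ((n:ℝ) + 1) * q ≤ cc * q := mul_le_mul_of_nonneg_right h3 hq0
          _ ≤ r / 2 := h4
        have hτqr : ∀ n, ‖τ n‖ * q < r := fun n => lt_of_le_of_lt (hτq n) (half_lt_self hr)
        have hτu : ∀ n, ‖τ n‖ * ‖u‖ < r := by
          intro n
          refine lt_of_le_of_lt ?_ (hτqr n)
          refine mul_le_mul_of_nonneg_left ?_ (norm_nonneg _)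
          rw [hqd]
          linarith [norm_nonneg u']
        have hτu' : ∀ n, ‖τ n‖ * ‖u'‖ < r := by
          intro n
          refine lt_of_le_of_lt ?_ (hτqr n)
          refine mul_le_mul_of_nonneg_left ?_ (norm_nonneg _)
          rw [hqd]
          linarith [norm_nonneg u]
        have hτuu : ∀ n, ‖τ n‖ * ‖u + u'‖ < r := fun n =>
          lt_of_le_of_lt (mul_le_mul_of_nonneg_left (norm_add_le u u') (norm_nonneg _)) (hτqr n)
        have hτtend : Tendsto (fun n => ‖τ n‖) atTop (𝓝 0) :=
          (htend0 cc).congr fun n => (hτn n).symm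
        set X : ℂ := D (u + u') y - D u y - D u' y with hXd
        set A : ℝ := K * (4 * (‖y‖ / mm) * (‖u + u'‖ / r) ^ 2)
          + K * (4 * (‖y‖ / mm) * (‖u‖ / r) ^ 2)
          + K * (4 * (‖y‖ / mm) * (‖u'‖ / r) ^ 2)
          + K * (4 * (‖y‖ / mm) * (q / r) ^ 2) with hAd
        have hXb : ∀ n : ℕ, ‖X‖ ≤ A * ‖τ n‖ := by
          intro n
          have e1 := hP1 (u + u') y (τ n) (hτ0 n) (hτuu n)
          have e2 := hP1 u y (τ n) (hτ0 n) (hτu n)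
          have e3 := hP1 u' y (τ n) (hτ0 n) (hτu' n)
          have e4 := hC2 u u' y (τ n) (hτqr n)
          have hτnz : (0:ℝ) < ‖τ n‖ := norm_pos_iff.mpr (hτ0 n)
          have e5 : ‖(φ (x₀ + τ n • (u + u')) y - φ (x₀ + τ n • u) y - φ (x₀ + τ n • u') y
              + φ x₀ y) / τ n‖ ≤ K * (4 * (‖y‖ / mm) * (q / r) ^ 2) * ‖τ n‖ := by
            rw [norm_div, div_le_iff₀ hτnz]
            calc ‖φ (x₀ + τ n • (u + u')) y - φ (x₀ + τ n • u) y - φ (x₀ + τ n • u') y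
                + φ x₀ y‖ ≤ K * (4 * (‖y‖ / mm) * (q / r) ^ 2) * ‖τ n‖ ^ 2 := e4
            _ = K * (4 * (‖y‖ / mm) * (q / r) ^ 2) * ‖τ n‖ * ‖τ n‖ := by ring
          have hne := hτ0 n
          have hdec : X = -((φ (x₀ + τ n • (u + u')) y - φ x₀ y) / τ n - D (u + u') y)
              + ((φ (x₀ + τ n • u) y - φ x₀ y) / τ n - D u y)
              + ((φ (x₀ + τ n • u') y - φ x₀ y) / τ n - D u' y)
              + (φ (x₀ + τ n • (u + u')) y - φ (x₀ + τ n • u) y - φ (x₀ + τ n • u') y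
                + φ x₀ y) / τ n := by
            rw [hXd]
            field_simp
            ring
          have tri : ‖X‖ ≤ ‖(φ (x₀ + τ n • (u + u')) y - φ x₀ y) / τ n - D (u + u') y‖
              + ‖(φ (x₀ + τ n • u) y - φ x₀ y) / τ n - D u y‖
              + ‖(φ (x₀ + τ n • u') y - φ x₀ y) / τ n - D u' y‖
              + ‖(φ (x₀ + τ n • (u + u')) y - φ (x₀ + τ n • u) y - φ (x₀ + τ n • u') y
                + φ x₀ y) / τ n‖ := by
            rw [hdec]
            have t1 := norm_add_le (-((φ (x₀ + τ n • (u + u')) y - φ x₀ y) / τ n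
              - D (u + u') y) + ((φ (x₀ + τ n • u) y - φ x₀ y) / τ n - D u y)
              + ((φ (x₀ + τ n • u') y - φ x₀ y) / τ n - D u' y))
              ((φ (x₀ + τ n • (u + u')) y - φ (x₀ + τ n • u) y - φ (x₀ + τ n • u') y
                + φ x₀ y) / τ n)
            have t2 := norm_add_le (-((φ (x₀ + τ n • (u + u')) y - φ x₀ y) / τ n
              - D (u + u') y) + ((φ (x₀ + τ n • u) y - φ x₀ y) / τ n - D u y))
              ((φ (x₀ + τ n • u') y - φ x₀ y) / τ n - D u' y)
            have t3 := norm_add_le (-((φ (x₀ + τ n • (u + u')) y - φ x₀ y) / τ n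
              - D (u + u') y)) ((φ (x₀ + τ n • u) y - φ x₀ y) / τ n - D u y)
            rw [norm_neg] at t3
            linarith
          rw [hAd]
          have hexp : (K * (4 * (‖y‖ / mm) * (‖u + u'‖ / r) ^ 2)
              + K * (4 * (‖y‖ / mm) * (‖u‖ / r) ^ 2)
              + K * (4 * (‖y‖ / mm) * (‖u'‖ / r) ^ 2)
              + K * (4 * (‖y‖ / mm) * (q / r) ^ 2)) * ‖τ n‖
              = K * (4 * (‖y‖ / mm) * (‖u + u'‖ / r) ^ 2) * ‖τ n‖
              + K * (4 * (‖y‖ / mm) * (‖u‖ / r) ^ 2) * ‖τ n‖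
              + K * (4 * (‖y‖ / mm) * (‖u'‖ / r) ^ 2) * ‖τ n‖
              + K * (4 * (‖y‖ / mm) * (q / r) ^ 2) * ‖τ n‖ := by ring
          rw [hexp]
          linarith
        have hA0 : Tendsto (fun n => A * ‖τ n‖) atTop (𝓝 0) := by
          have h7 := hτtend.const_mul A
          simpa using h7
        have hX0 : ‖X‖ ≤ 0 := le_of_tendsto_of_tendsto' tendsto_const_nhds hA0 hXb
        have hX : X = 0 := norm_le_zero_iff.mp hX0
        rw [hXd] at hX
        linear_combination hX
      have hQmemU : ∀ (u : E) (n : ℕ), x₀ + σ u n • u ∈ U := fun u n => hmemU _ _ (hσlt u n)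
      have hDaddy : ∀ (u : E) (y y' : F), D u (y + y') = D u y + D u y' := by
        intro u y y'
        have heq : Q u (y + y') = fun n => Q u y n + Q u y' n := by
          funext n
          rw [hQd]
          simp only
          rw [hadd _ (hQmemU u n) y y', hadd _ hx₀ y y']
          ring
        have h1 := hD u (y + y')
        rw [heq] at h1
        exact tendsto_nhds_unique h1 ((hD u y).add (hD u y'))
      have hDsmuly : ∀ (u : E) (a : ℂ) (y : F), D u (a • y) = a * D u y := by
        intro u a y
        have heq : Q u (a • y) = fun n => a * Q u y n := by
          funext n
          rw [hQd]
          simp only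
          rw [hsmul _ (hQmemU u n) a y, hsmul _ hx₀ a y]
          ring
        have h1 := hD u (a • y)
        rw [heq] at h1
        exact tendsto_nhds_unique h1 ((hD u y).const_mul a)
      set Dl : E →ₗ[ℂ] F →ₗ[ℂ] ℂ := LinearMap.mk₂ ℂ D
        (fun u u' y => hDaddu u u' y)
        (fun a u y => by rw [hhom a u y, smul_eq_mul])
        (fun u y y' => hDaddy u y y')
        (fun a u y => by rw [hDsmuly u a y, smul_eq_mul]) with hDld
      have hDlb : ∀ (u : E) (y : F), ‖Dl u y‖ ≤ K * (4 / (mm * r)) * ‖u‖ * ‖y‖ := by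
        intro u y
        have h1 : Dl u y = D u y := rfl
        rw [h1]
        calc ‖D u y‖ ≤ K * (4 * (‖y‖ / mm) * (‖u‖ / r)) := hP3 u y
        _ = K * (4 / (mm * r)) * ‖u‖ * ‖y‖ := by
            field_simp
      set A2 : E →L[ℂ] F →L[ℂ] ℂ := LinearMap.mkContinuous₂ Dl (K * (4 / (mm * r))) hDlb
        with hA2d
      have hAap : ∀ (u : E) (y : F), A2 u y = D u y := fun u y => rfl
      have hfd : HasFDerivAt f A2 x₀ := by
        rw [hasFDerivAt_iff_isLittleO_nhds_zero, Asymptotics.isLittleO_iff]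
        intro c hc
        have hKC : (0:ℝ) ≤ K * (4 / (mm * r ^ 2)) := mul_nonneg hK (by positivity)
        rw [Metric.eventually_nhds_iff]
        refine ⟨min (r / 2) (c / (K * (4 / (mm * r ^ 2)) + 1)),
          lt_min (half_pos hr) (div_pos hc (by linarith)), fun u hu => ?_⟩
        rw [dist_zero_right] at hu
        have hu1 : ‖u‖ < r / 2 := lt_of_lt_of_le hu (min_le_left _ _)
        have hu2 : ‖u‖ < c / (K * (4 / (mm * r ^ 2)) + 1) := lt_of_lt_of_le hu (min_le_right _ _)
        have hur : ‖u‖ < r := by linarith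
        have hxuU : x₀ + u ∈ U := by
          apply hball
          rw [Metric.mem_ball, dist_eq_norm, add_sub_cancel_left]
          exact hur
        have hopb : ‖f (x₀ + u) - f x₀ - A2 u‖ ≤ K * (4 / (mm * r ^ 2)) * ‖u‖ ^ 2 := by
          refine ContinuousLinearMap.opNorm_le_bound _ (mul_nonneg hKC (sq_nonneg _)) fun y => ?_
          have h1 : (f (x₀ + u) - f x₀ - A2 u) y = φ (x₀ + u) y - φ x₀ y - D u y := by
            simp only [ContinuousLinearMap.sub_apply]
            rw [hfval _ hxuU y, hfval _ hx₀ y, hAap u y]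
          rw [h1]
          calc ‖φ (x₀ + u) y - φ x₀ y - D u y‖
              ≤ K * (4 * (‖y‖ / mm) * (‖u‖ / r) ^ 2) := hP2 u y hur
          _ = K * (4 / (mm * r ^ 2)) * ‖u‖ ^ 2 * ‖y‖ := by
              field_simp
        calc ‖f (x₀ + u) - f x₀ - A2 u‖ ≤ K * (4 / (mm * r ^ 2)) * ‖u‖ ^ 2 := hopb
        _ = (K * (4 / (mm * r ^ 2)) * ‖u‖) * ‖u‖ := by ring
        _ ≤ c * ‖u‖ := by
            refine mul_le_mul_of_nonneg_right ?_ (norm_nonneg u)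
            have h2 : ‖u‖ * (K * (4 / (mm * r ^ 2)) + 1) < c :=
              (lt_div_iff₀ (by linarith)).mp hu2
            nlinarith [norm_nonneg u]
      exact hfd.differentiableAt
    exact ⟨f, fun z hz => (hdiff z hz).differentiableWithinAt, hfnorm,
      fun z hz y => (hfval z hz y).symm⟩
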